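/- The set of commutators of strictly upper triangular matrices spans, and in fact equals, UT_n^{(1)}: {[A,B] : A, B ∈ UT_n^{(0)}} = UT_n^{(1)}. -/

import Mathlib

open Matrix

/-- The set of commutators of strictly upper triangular matrices equals
`UT_n^{(1)}`. -/
theorem stmt15 {K : Type*} [Field K] {n : ℕ} (hn : 2 ≤ n) :
    {M : Matrix (Fin n) (Fin n) K | ∃ A B : Matrix (Fin n) (Fin n) K,
        (∀ a b : Fin n, b ≤ a → A a b = 0) ∧ (∀ a b : Fin n, b ≤ a → B a b = 0) ∧
        M = A * B - B * A}
      = {M : Matrix (Fin n) (Fin n) K | ∀ a b : Fin n, (b : ℤ) - (a : ℤ) ≤ 1 → M a b = 0} := by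
  ext M
  simp only [Set.mem_setOf_eq]
  constructor
  · rintro ⟨A, B, hA, hB, rfl⟩ a b hab
    have hba : (b : ℕ) ≤ (a : ℕ) + 1 := by omega
    simp only [Matrix.sub_apply, Matrix.mul_apply]
    rw [sub_eq_zero]
    have h1 : ∑ k, A a k * B k b = 0 := by
      apply Finset.sum_eq_zero
      intro k _
      rcases le_or_gt (k : ℕ) (a : ℕ) with h | h
      · rw [hA a k (Fin.le_def.mpr h), zero_mul]
      · rw [hB k b (Fin.le_def.mpr (by omega)), mul_zero]
    have h2 : ∑ k, B a k * A k b = 0 := by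
      apply Finset.sum_eq_zero
      intro k _
      rcases le_or_gt (k : ℕ) (a : ℕ) with h | h
      · rw [hB a k (Fin.le_def.mpr h), zero_mul]
      · rw [hA k b (Fin.le_def.mpr (by omega)), mul_zero]
    rw [h1, h2]
  · intro hM
    set A : Matrix (Fin n) (Fin n) K :=
      fun a b => if (b : ℕ) = (a : ℕ) + 1 then 1 else 0 with hAdef
    set B : Matrix (Fin n) (Fin n) K :=
      fun a b => if (a : ℕ) < (b : ℕ) then
        ∑ i : Fin n, ∑ j : Fin n,
          if (i : ℕ) < (a : ℕ) ∧ (j : ℕ) = (i : ℕ) + ((b : ℕ) - (a : ℕ)) + 1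
          then M i j else 0
        else 0 with hBdef
    refine ⟨A, B, ?_, ?_, ?_⟩
    · intro a b hba
      simp only [hAdef]
      rw [if_neg (by have := Fin.le_def.mp hba; omega)]
    · intro a b hba
      simp only [hBdef]
      rw [if_neg (by have := Fin.le_def.mp hba; omega)]
    · ext a b
      simp only [Matrix.sub_apply, Matrix.mul_apply]
      rcases le_or_gt (b : ℕ) ((a : ℕ) + 1) with hab | hab
      · -- both products vanish, and M a b = 0
        have h1 : ∑ k, A a k * B k b = 0 := by
          apply Finset.sum_eq_zero
          intro k _
          simp only [hAdef, hBdef]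
          rcases eq_or_ne ((k : ℕ)) ((a : ℕ) + 1) with h | h
          · rw [if_neg (show ¬ (k : ℕ) < (b : ℕ) by omega), mul_zero]
          · rw [if_neg h, zero_mul]
        have h2 : ∑ k, B a k * A k b = 0 := by
          apply Finset.sum_eq_zero
          intro k _
          simp only [hAdef, hBdef]
          rcases eq_or_ne ((b : ℕ)) ((k : ℕ) + 1) with h | h
          · rw [if_neg (show ¬ (a : ℕ) < (k : ℕ) by omega), zero_mul]
          · rw [if_neg h, mul_zero]
        rw [h1, h2, sub_zero]
        exact hM a b (by omega)
      · -- b ≥ a + 2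
        have hbn : (b : ℕ) < n := b.isLt
        have ha1 : (a : ℕ) + 1 < n := by omega
        have hb1 : (b : ℕ) - 1 < n := by omega
        set a' : Fin n := ⟨(a : ℕ) + 1, ha1⟩ with ha'
        set b' : Fin n := ⟨(b : ℕ) - 1, hb1⟩ with hb'
        have h1 : ∑ k, A a k * B k b = B a' b := by
          rw [Finset.sum_eq_single a']
          · simp [hAdef, ha']
          · intro k _ hk
            have hne : (k : ℕ) ≠ (a : ℕ) + 1 := fun h => hk (by
              apply Fin.ext; simp [ha', h])
            simp only [hAdef]
            rw [if_neg hne, zero_mul]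
          · intro h; exact absurd (Finset.mem_univ a') h
        have h2 : ∑ k, B a k * A k b = B a b' := by
          rw [Finset.sum_eq_single b']
          · have : (b : ℕ) = (b' : ℕ) + 1 := by simp [hb']; omega
            simp only [hAdef]
            rw [if_pos this, mul_one]
          · intro k _ hk
            have hne : (b : ℕ) ≠ (k : ℕ) + 1 := fun h => hk (by
              apply Fin.ext; simp [hb']; omega)
            simp only [hAdef]
            rw [if_neg hne, mul_zero]
          · intro h; exact absurd (Finset.mem_univ b') h
        rw [h1, h2]
        simp only [hBdef, ha', hb']
        rw [if_pos (show ((⟨(a : ℕ) + 1, ha1⟩ : Fin n) : ℕ) < (b : ℕ) from hab),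
          if_pos (show (a : ℕ) < ((⟨(b : ℕ) - 1, hb1⟩ : Fin n) : ℕ) by simp; omega)]
        rw [← Finset.sum_sub_distrib]
        have key : ∀ i : Fin n,
            ((∑ j : Fin n, if (i : ℕ) < ((⟨(a : ℕ) + 1, ha1⟩ : Fin n) : ℕ) ∧
                (j : ℕ) = (i : ℕ) + ((b : ℕ) - ((⟨(a : ℕ) + 1, ha1⟩ : Fin n) : ℕ)) + 1
              then M i j else 0) -
             (∑ j : Fin n, if (i : ℕ) < (a : ℕ) ∧
                (j : ℕ) = (i : ℕ) + (((⟨(b : ℕ) - 1, hb1⟩ : Fin n) : ℕ) - (a : ℕ)) + 1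
              then M i j else 0))
            = ∑ j : Fin n, if (i : ℕ) = (a : ℕ) ∧ (j : ℕ) = (b : ℕ) then M i j else 0 := by
          intro i
          rw [← Finset.sum_sub_distrib]
          apply Finset.sum_congr rfl
          intro j _
          simp only [Fin.val_mk]
          split_ifs <;> first
            | (exfalso; omega)
            | ring
        simp only [key]
        have htot : ∑ i : Fin n, ∑ j : Fin n,
            (if (i : ℕ) = (a : ℕ) ∧ (j : ℕ) = (b : ℕ) then M i j else 0) = M a b := by
          rw [Finset.sum_eq_single a]
          · rw [Finset.sum_eq_single b]
            · rw [if_pos ⟨rfl, rfl⟩]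
            · intro j _ hj
              rw [if_neg (fun h => hj (Fin.ext h.2))]
            · intro h; exact absurd (Finset.mem_univ b) h
          · intro i _ hi
            apply Finset.sum_eq_zero
            intro j _
            rw [if_neg (fun h => hi (Fin.ext h.1))]
          · intro h; exact absurd (Finset.mem_univ a) h
        rw [htot]
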